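/- Let l ∈ (0, 1/6), r = 1 − 2l, c = l·r², and let λ and M be as defined. Then for every (x,y,z) ∈ [0,1]³, one has (x,y,z) ∈ M if and only if λ(x) = y·z, λ(y) = x·z, and λ(z) = x·y. -/

import Mathlib

open Set

/-- The piecewise function `λ`: `(1−2x)²` on `[0, l)`, `c/x` on `[l, r)` and `x(1−x)/2` on
`[r, 1]`, where `r = 1 − 2l` and `c = l·r²`. -/
noncomputable def lam (l : ℝ) (x : ℝ) : ℝ :=
  if x < l then (1 - 2*x)^2
  else if x < 1 - 2*l then (l * (1 - 2*l)^2) / x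
  else x * (1 - x) / 2

/-- The set `M ⊆ [0,1]³`: the union of the three segments
`Mx = {(t, 1−2t, 1−2t) : 0 ≤ t ≤ l}`, `My = {(1−2t, t, 1−2t) : 0 ≤ t ≤ l}`,
`Mz = {(1−2t, 1−2t, t) : 0 ≤ t ≤ l}` and the two-dimensional piece
`M₂ = {(x,y,z) : l ≤ x,y,z ≤ 1−2l, xyz = l(1−2l)²}`. -/
def Mset (l : ℝ) : Set (ℝ × ℝ × ℝ) :=
  {p | ∃ t, 0 ≤ t ∧ t ≤ l ∧
    (p = (t, 1 - 2*t, 1 - 2*t) ∨ p = (1 - 2*t, t, 1 - 2*t) ∨ p = (1 - 2*t, 1 - 2*t, t))} ∪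
  {p | l ≤ p.1 ∧ p.1 ≤ 1 - 2*l ∧ l ≤ p.2.1 ∧ p.2.1 ≤ 1 - 2*l ∧ l ≤ p.2.2 ∧ p.2.2 ≤ 1 - 2*l ∧
    p.1 * p.2.1 * p.2.2 = l * (1 - 2*l)^2}

lemma lam_small (l t : ℝ) (h : t < l) : lam l t = (1 - 2*t)^2 := by
  unfold lam; rw [if_pos h]

lemma lam_large (l t : ℝ) (hl : l < 1/6) (h : 1 - 2*l ≤ t) : lam l t = t * (1 - t) / 2 := by
  unfold lam; rw [if_neg (by linarith), if_neg (by linarith)]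

-- strict monotonicity of t(1-2t)^2 on [0, 1/6)
lemma key (a b : ℝ) (ha0 : 0 ≤ a) (hb : b < 1/6) (hab : a < b) :
    a*(1-2*a)^2 < b*(1-2*b)^2 := by
  have h1 : 0 < 1 - (a+b) := by linarith
  have h2 : 0 < 1 - 3*(a+b) := by linarith
  have hQ : 0 < (1-2*a-2*b)^2 - 4*a*b := by nlinarith [sq_nonneg (a-b), mul_pos h1 h2]
  nlinarith [mul_pos (sub_pos.2 hab) hQ]

lemma inj (a b : ℝ) (ha0 : 0 ≤ a) (ha : a < 1/6) (hb0 : 0 ≤ b) (hb : b < 1/6)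
    (heq : a*(1-2*a)^2 = b*(1-2*b)^2) : a = b := by
  rcases lt_trichotomy a b with h | h | h
  · exact absurd heq (ne_of_lt (key a b ha0 hb h))
  · exact h
  · exact absurd heq.symm (ne_of_lt (key b a hb0 ha h))

lemma f_eq (l t : ℝ) (hl0 : 0 < l) (hl6 : l < 1/6) (h1 : l ≤ t) (h2 : t ≤ 1 - 2*l) :
    t * lam l t = l*(1-2*l)^2 := by
  unfold lam
  rw [if_neg (not_lt.2 h1)]
  rcases lt_or_ge t (1-2*l) with h | h
  · rw [if_pos h]
    have ht : t ≠ 0 := ne_of_gt (lt_of_lt_of_le hl0 h1)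
    field_simp
  · rw [if_neg (not_lt.2 h)]
    have : t = 1 - 2*l := le_antisymm h2 h
    rw [this]; ring

lemma f_lt (l t : ℝ) (hl0 : 0 < l) (hl6 : l < 1/6) (ht0 : 0 ≤ t) (ht1 : t ≤ 1)
    (h : t < l ∨ 1 - 2*l < t) : t * lam l t < l*(1-2*l)^2 := by
  rcases h with h | h
  · rw [lam_small l t h]
    exact key t l ht0 hl6 h
  · rw [lam_large l t hl6 h.le]
    have hs : (1-t)/2 < l := by linarith
    have := key ((1-t)/2) l (by linarith) hl6 hs
    nlinarith [this]

lemma shape (l w : ℝ) (hl0 : 0 < l) (hl6 : l < 1/6) (hw0 : 0 ≤ w) (hw1 : w ≤ 1)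
    (hw : w < l ∨ 1 - 2*l < w) :
    ∃ s, 0 ≤ s ∧ s < l ∧ (w = s ∨ w = 1 - 2*s) ∧ w * lam l w = s*(1-2*s)^2 := by
  rcases hw with h | h
  · exact ⟨w, hw0, h, Or.inl rfl, by rw [lam_small l w h]⟩
  · refine ⟨(1-w)/2, by linarith, by linarith, Or.inr (by ring), ?_⟩
    rw [lam_large l w hl6 h.le]; ring

/-- A point `(x, y, z)` of `[0,1]³` belongs to `M` if and only if
`λ(x) = yz`, `λ(y) = xz` and `λ(z) = xy`. -/
theorem mem_Mset_iff (l : ℝ) (hl : l ∈ Set.Ioo (0 : ℝ) (1/6)) (x y z : ℝ)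
    (hx : x ∈ Set.Icc (0 : ℝ) 1) (hy : y ∈ Set.Icc (0 : ℝ) 1) (hz : z ∈ Set.Icc (0 : ℝ) 1) :
    (x, y, z) ∈ Mset l ↔ lam l x = y * z ∧ lam l y = x * z ∧ lam l z = x * y := by
  obtain ⟨hl0, hl6⟩ := hl
  obtain ⟨hx0, hx1⟩ := hx
  obtain ⟨hy0, hy1⟩ := hy
  obtain ⟨hz0, hz1⟩ := hz
  have hlr : l < 1 - 2*l := by linarith
  constructor
  · rintro (⟨t, ht0, htl, (h|h|h)⟩ | ⟨h1,h2,h3,h4,h5,h6,h7⟩)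
    -- segment Mx
    · obtain ⟨hx', hy', hz'⟩ : x = t ∧ y = 1-2*t ∧ z = 1-2*t := by
        simpa [Prod.ext_iff] using h
      subst hx'; subst hy'; subst hz'
      refine ⟨?_, ?_, ?_⟩
      · unfold lam
        split_ifs with h1 h2
        · ring
        · have ht : x = l := le_antisymm htl (not_lt.1 h1)
          subst ht
          field_simp
        · exfalso; linarith
      · unfold lam
        split_ifs with h1 h2
        · exfalso; linarith
        · exfalso; linarith
        · ring
      · unfold lam
        split_ifs with h1 h2
        · exfalso; linarith
        · exfalso; linarith
        · ring
    -- segment My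
    · obtain ⟨hx', hy', hz'⟩ : x = 1-2*t ∧ y = t ∧ z = 1-2*t := by
        simpa [Prod.ext_iff] using h
      subst hx'; subst hy'; subst hz'
      refine ⟨?_, ?_, ?_⟩
      · unfold lam
        split_ifs with h1 h2
        · exfalso; linarith
        · exfalso; linarith
        · ring
      · unfold lam
        split_ifs with h1 h2
        · ring
        · have ht : y = l := le_antisymm htl (not_lt.1 h1)
          subst ht
          field_simp
        · exfalso; linarith
      · unfold lam
        split_ifs with h1 h2
        · exfalso; linarith
        · exfalso; linarith
        · ring
    -- segment Mz
    · obtain ⟨hx', hy', hz'⟩ : x = 1-2*t ∧ y = 1-2*t ∧ z = t := by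
        simpa [Prod.ext_iff] using h
      subst hx'; subst hy'; subst hz'
      refine ⟨?_, ?_, ?_⟩
      · unfold lam
        split_ifs with h1 h2
        · exfalso; linarith
        · exfalso; linarith
        · ring
      · unfold lam
        split_ifs with h1 h2
        · exfalso; linarith
        · exfalso; linarith
        · ring
      · unfold lam
        split_ifs with h1 h2
        · ring
        · have ht : z = l := le_antisymm htl (not_lt.1 h1)
          subst ht
          field_simp
        · exfalso; linarith
    -- two-dimensional piece
    · simp only at h1 h2 h3 h4 h5 h6 h7
      have hxpos : 0 < x := lt_of_lt_of_le hl0 h1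
      have hypos : 0 < y := lt_of_lt_of_le hl0 h3
      have hzpos : 0 < z := lt_of_lt_of_le hl0 h5
      refine ⟨?_, ?_, ?_⟩
      · unfold lam
        rw [if_neg (not_lt.2 h1)]
        rcases lt_or_ge x (1-2*l) with h | h
        · rw [if_pos h, div_eq_iff hxpos.ne']
          linear_combination -h7
        · rw [if_neg (not_lt.2 h)]
          have hx' : x = 1 - 2*l := le_antisymm h2 h
          rw [hx'] at h7 ⊢
          have hr0 : 0 < (1:ℝ) - 2*l := by linarith
          have hcc : (1-2*l) * (y*z) = (1-2*l) * ((1-2*l)*(1-(1-2*l))/2) := by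
            linear_combination h7
          exact (mul_left_cancel₀ hr0.ne' hcc).symm
      · unfold lam
        rw [if_neg (not_lt.2 h3)]
        rcases lt_or_ge y (1-2*l) with h | h
        · rw [if_pos h, div_eq_iff hypos.ne']
          linear_combination -h7
        · rw [if_neg (not_lt.2 h)]
          have hy' : y = 1 - 2*l := le_antisymm h4 h
          rw [hy'] at h7 ⊢
          have hr0 : 0 < (1:ℝ) - 2*l := by linarith
          have hcc : (1-2*l) * (x*z) = (1-2*l) * ((1-2*l)*(1-(1-2*l))/2) := by
            linear_combination h7
          exact (mul_left_cancel₀ hr0.ne' hcc).symm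
      · unfold lam
        rw [if_neg (not_lt.2 h5)]
        rcases lt_or_ge z (1-2*l) with h | h
        · rw [if_pos h, div_eq_iff hzpos.ne']
          linear_combination -h7
        · rw [if_neg (not_lt.2 h)]
          have hz' : z = 1 - 2*l := le_antisymm h6 h
          rw [hz'] at h7 ⊢
          have hr0 : 0 < (1:ℝ) - 2*l := by linarith
          have hcc : (1-2*l) * (x*y) = (1-2*l) * ((1-2*l)*(1-(1-2*l))/2) := by
            linear_combination h7
          exact (mul_left_cancel₀ hr0.ne' hcc).symm
  · rintro ⟨ex, ey, ez⟩
    have ex' : x * lam l x = x*y*z := by rw [ex]; ring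
    have ey' : y * lam l y = x*y*z := by rw [ey]; ring
    have ez' : z * lam l z = x*y*z := by rw [ez]; ring
    by_cases hP : x*y*z = l*(1-2*l)^2
    · -- all coordinates must lie in [l, 1-2l]
      have hcoord : ∀ w : ℝ, 0 ≤ w → w ≤ 1 → w * lam l w = x*y*z → l ≤ w ∧ w ≤ 1-2*l := by
        intro w hw0 hw1 hfw
        by_contra hc
        rw [not_and_or, not_le, not_le] at hc
        have := f_lt l w hl0 hl6 hw0 hw1 hc
        rw [hfw, hP] at this
        exact lt_irrefl _ this
      obtain ⟨ha1, ha2⟩ := hcoord x hx0 hx1 ex'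
      obtain ⟨hb1, hb2⟩ := hcoord y hy0 hy1 ey'
      obtain ⟨hc1, hc2⟩ := hcoord z hz0 hz1 ez'
      exact Or.inr ⟨ha1, ha2, hb1, hb2, hc1, hc2, hP⟩
    · -- all coordinates avoid [l, 1-2l]
      have hcoord : ∀ w : ℝ, 0 ≤ w → w ≤ 1 → w * lam l w = x*y*z → w < l ∨ 1-2*l < w := by
        intro w hw0 hw1 hfw
        by_contra hc
        rw [not_or, not_lt, not_lt] at hc
        exact hP (by rw [← hfw, f_eq l w hl0 hl6 hc.1 hc.2])
      obtain ⟨a, ha0, hal, hxa, hfa⟩ := shape l x hl0 hl6 hx0 hx1 (hcoord x hx0 hx1 ex')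
      obtain ⟨b, hb0, hbl, hyb, hfb⟩ := shape l y hl0 hl6 hy0 hy1 (hcoord y hy0 hy1 ey')
      obtain ⟨c, hc0, hcl, hzc, hfc⟩ := shape l z hl0 hl6 hz0 hz1 (hcoord z hz0 hz1 ez')
      have hab : a = b := inj a b ha0 (by linarith) hb0 (by linarith)
        (by rw [← hfa, ← hfb, ex', ey'])
      have hac : a = c := inj a c ha0 (by linarith) hc0 (by linarith)
        (by rw [← hfa, ← hfc, ex', ez'])
      subst hab; subst hac
      have hlamS : lam l a = (1-2*a)^2 := lam_small l a (by linarith)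
      have hlamL : lam l (1-2*a) = (1-2*a)*(1-(1-2*a))/2 :=
        lam_large l (1-2*a) hl6 (by linarith)
      rcases hxa with hX | hX <;> rcases hyb with hY | hY <;> rcases hzc with hZ | hZ
      · -- SSS
        exfalso; rw [hX, hY, hZ, hlamS] at ex; nlinarith [ex]
      · -- SSL
        exfalso; rw [hX, hY, hZ, hlamS] at ex; nlinarith [ex]
      · -- SLS
        exfalso; rw [hX, hY, hZ, hlamS] at ex; nlinarith [ex]
      · -- SLL : Mx
        exact Or.inl ⟨a, ha0, hal.le, Or.inl (by rw [hX, hY, hZ])⟩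
      · -- LSS
        exfalso; rw [hX, hY, hZ, hlamS] at ey; nlinarith [ey]
      · -- LSL : My
        exact Or.inl ⟨a, ha0, hal.le, Or.inr (Or.inl (by rw [hX, hY, hZ]))⟩
      · -- LLS : Mz
        exact Or.inl ⟨a, ha0, hal.le, Or.inr (Or.inr (by rw [hX, hY, hZ]))⟩
      · -- LLL
        exfalso; rw [hX, hY, hZ, hlamL] at ex; nlinarith [ex]
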